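/- Let f₁, f₂ : ℝⁿ → ℝⁿ be three times continuously differentiable with f₁, f₂ and all their derivatives up to order 3 bounded on ℝⁿ. Let Φ₁, Φ₂, Φ : ℝ × ℝⁿ → ℝⁿ be the exact flows of x' = f₁(x), x' = f₂(x), and x' = f₁(x) + f₂(x) respectively, i.e., Φᵢ(0, ξ) = ξ, ∂_t Φᵢ(t, ξ) = fᵢ(Φᵢ(t, ξ)) for all t, ξ (and analogously for Φ with vector field f₁ + f₂). Then for every x₀ ∈ ℝⁿ there exist constants C ≥ 0 and h₀ > 0 such that for all h ∈ [0, h₀], the local error of the Strang splitting satisfies ‖Φ₁(h/2, Φ₂(h, Φ₁(h/2, x₀))) − Φ(h, x₀)‖ ≤ C h³. -/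

import Mathlib

open Set

variable {E : Type*} [NormedAddCommGroup E] [NormedSpace ℝ E]

/-- First-order bound: curve with bounded derivative. -/
lemma curve_lip {g g1 : ℝ → E} {M : ℝ} (hg : ∀ t, HasDerivAt g (g1 t) t)
    (hM : ∀ t, ‖g1 t‖ ≤ M) {t : ℝ} (ht : 0 ≤ t) : ‖g t - g 0‖ ≤ M * t := by
  have := Convex.norm_image_sub_le_of_norm_hasDerivWithin_le
    (f := g) (f' := g1) (s := Icc 0 t)
    (fun x _ => (hg x).hasDerivWithinAt) (fun x _ => hM x) (convex_Icc 0 t)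
    (left_mem_Icc.2 ht) (right_mem_Icc.2 ht)
  simpa [Real.norm_eq_abs, abs_of_nonneg ht] using this

/-- Second-order Taylor bound for a thrice differentiable curve. -/
lemma curve_taylor2 {g g1 g2 g3 : ℝ → E} {K : ℝ}
    (hg : ∀ t, HasDerivAt g (g1 t) t) (hg1 : ∀ t, HasDerivAt g1 (g2 t) t)
    (hg2 : ∀ t, HasDerivAt g2 (g3 t) t) (hK : ∀ t, ‖g3 t‖ ≤ K)
    {T : ℝ} (hT : 0 ≤ T) :
    ‖g T - g 0 - T • g1 0 - (T ^ 2 / 2) • g2 0‖ ≤ K * T ^ 3 / 6 := by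
  -- step 1 : ‖g2 t - g2 0‖ ≤ K * t on [0, T]
  have step1 : ∀ x ∈ Icc (0:ℝ) T, ‖g2 x - g2 0‖ ≤ K * x := by
    intro x hx
    have := Convex.norm_image_sub_le_of_norm_hasDerivWithin_le
      (f := g2) (f' := g3) (s := Icc 0 T)
      (fun y _ => (hg2 y).hasDerivWithinAt) (fun y _ => hK y) (convex_Icc 0 T)
      (left_mem_Icc.2 hT) hx
    simpa [Real.norm_eq_abs, abs_of_nonneg hx.1] using this
  -- step 2 : φ1 x = g1 x - g1 0 - x • g2 0, ‖φ1 x‖ ≤ K x²/2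
  set φ1 : ℝ → E := fun x => g1 x - g1 0 - x • g2 0 with hφ1
  have hφ1' : ∀ x, HasDerivAt φ1 (g2 x - g2 0) x := by
    intro x
    have h2 : HasDerivAt (fun y : ℝ => y • g2 0) ((1:ℝ) • g2 0) x :=
      (hasDerivAt_id x).smul_const (g2 0)
    have h3 := ((hg1 x).sub_const (g1 0)).sub h2
    simp only [one_smul] at h3
    exact h3
  have step2 : ∀ x ∈ Icc (0:ℝ) T, ‖φ1 x‖ ≤ K * x ^ 2 / 2 := by
    have hB : ∀ x : ℝ, HasDerivAt (fun y : ℝ => K * y ^ 2 / 2) (K * x) x := by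
      intro x
      have : HasDerivAt (fun y : ℝ => K * y ^ 2 / 2) (K * (2 * x ^ 1) / 2) x :=
        ((hasDerivAt_pow 2 x).const_mul K).div_const 2
      convert this using 1; ring
    have := image_norm_le_of_norm_deriv_right_le_deriv_boundary
      (f := φ1) (f' := fun x => g2 x - g2 0) (a := 0) (b := T)
      (fun x _ => (hφ1' x).continuousAt.continuousWithinAt)
      (fun x hx => (hφ1' x).hasDerivWithinAt)
      (B := fun y => K * y ^ 2 / 2) (B' := fun y => K * y)
      (by simp [φ1]) hB
      (fun x hx => step1 x ⟨hx.1, le_of_lt hx.2⟩)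
    exact fun x hx => this hx
  -- step 3
  set φ : ℝ → E := fun x => g x - g 0 - x • g1 0 - (x ^ 2 / 2) • g2 0 with hφ
  have hφ' : ∀ x, HasDerivAt φ (φ1 x) x := by
    intro x
    have h1 : HasDerivAt (fun y : ℝ => y • g1 0) ((1:ℝ) • g1 0) x :=
      (hasDerivAt_id x).smul_const (g1 0)
    have h2 : HasDerivAt (fun y : ℝ => (y ^ 2 / 2) • g2 0) ((2 * x ^ 1 / 2) • g2 0) x :=
      (((hasDerivAt_pow 2 x).div_const 2)).smul_const (g2 0)
    have := (((hg x).sub_const (g 0)).sub h1).sub h2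
    convert this using 1
    · rfl
    simp [φ1]
  have hB : ∀ x : ℝ, HasDerivAt (fun y : ℝ => K * y ^ 3 / 6) (K * x ^ 2 / 2) x := by
    intro x
    have : HasDerivAt (fun y : ℝ => K * y ^ 3 / 6) (K * (3 * x ^ 2) / 6) x :=
      ((hasDerivAt_pow 3 x).const_mul K).div_const 6
    convert this using 1; ring
  have := image_norm_le_of_norm_deriv_right_le_deriv_boundary
    (f := φ) (f' := φ1) (a := 0) (b := T)
    (fun x _ => (hφ' x).continuousAt.continuousWithinAt)
    (fun x hx => (hφ' x).hasDerivWithinAt)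
    (B := fun y => K * y ^ 3 / 6) (B' := fun y => K * y ^ 2 / 2)
    (by simp [φ]) hB
    (fun x hx => step2 x ⟨hx.1, le_of_lt hx.2⟩)
  exact this (right_mem_Icc.2 hT)

section VF

variable {f : E → E} {M : ℝ}

lemma vf_lip (hf : ContDiff ℝ 3 f) (hM1 : ∀ x, ‖fderiv ℝ f x‖ ≤ M) (x y : E) :
    ‖f y - f x‖ ≤ M * ‖y - x‖ :=
  Convex.norm_image_sub_le_of_norm_fderiv_le
    (fun z _ => hf.differentiable (by norm_num) z)
    (fun z _ => hM1 z) convex_univ (mem_univ x) (mem_univ y)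

lemma vf_lipD (hf : ContDiff ℝ 3 f) (hM2 : ∀ x, ‖fderiv ℝ (fderiv ℝ f) x‖ ≤ M) (x y : E) :
    ‖fderiv ℝ f y - fderiv ℝ f x‖ ≤ M * ‖y - x‖ :=
  Convex.norm_image_sub_le_of_norm_fderiv_le
    (fun z _ => ((hf.fderiv_right (m := 1) (by norm_num)).differentiable (by norm_num)) z)
    (fun z _ => hM2 z) convex_univ (mem_univ x) (mem_univ y)

lemma vf_taylor (hf : ContDiff ℝ 3 f) (hM2 : ∀ x, ‖fderiv ℝ (fderiv ℝ f) x‖ ≤ M) (x y : E) :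
    ‖f y - f x - fderiv ℝ f x (y - x)‖ ≤ M * ‖y - x‖ * ‖y - x‖ := by
  have hMnn : 0 ≤ M := le_trans (norm_nonneg _) (hM2 x)
  exact Convex.norm_image_sub_le_of_norm_fderiv_le'
    (f := f) (φ := fderiv ℝ f x) (s := Metric.closedBall x ‖y - x‖) (C := M * ‖y - x‖)
    (fun z _ => hf.differentiable (by norm_num) z)
    (fun z hz => by
      have h1 := vf_lipD hf hM2 x z
      have hz' : ‖z - x‖ ≤ ‖y - x‖ := by
        simpa [dist_eq_norm] using hz
      exact le_trans h1 (mul_le_mul_of_nonneg_left hz' hMnn))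
    (convex_closedBall _ _)
    (Metric.mem_closedBall_self (norm_nonneg _))
    (by simp [Metric.mem_closedBall, dist_eq_norm])

lemma vf_lipDf (hf : ContDiff ℝ 3 f) (hM0 : ∀ x, ‖f x‖ ≤ M)
    (hM1 : ∀ x, ‖fderiv ℝ f x‖ ≤ M) (hM2 : ∀ x, ‖fderiv ℝ (fderiv ℝ f) x‖ ≤ M) (x y : E) :
    ‖fderiv ℝ f y (f y) - fderiv ℝ f x (f x)‖ ≤ 2 * M ^ 2 * ‖y - x‖ := by
  have hMnn : 0 ≤ M := le_trans (norm_nonneg _) (hM2 x)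
  have key : fderiv ℝ f y (f y) - fderiv ℝ f x (f x)
      = (fderiv ℝ f y - fderiv ℝ f x) (f y) + fderiv ℝ f x (f y - f x) := by
    simp [ContinuousLinearMap.sub_apply, map_sub]
  rw [key]
  have h1 : ‖(fderiv ℝ f y - fderiv ℝ f x) (f y)‖ ≤ (M * ‖y - x‖) * M :=
    le_trans (ContinuousLinearMap.le_opNorm _ _)
      (mul_le_mul (vf_lipD hf hM2 x y) (hM0 y) (norm_nonneg _) (by positivity))
  have h2 : ‖fderiv ℝ f x (f y - f x)‖ ≤ M * (M * ‖y - x‖) :=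
    le_trans (ContinuousLinearMap.le_opNorm _ _)
      (mul_le_mul (hM1 x) (vf_lip hf hM1 x y) (norm_nonneg _) hMnn)
  calc ‖_ + _‖ ≤ _ + _ := norm_add_le _ _
    _ ≤ (M * ‖y - x‖) * M + M * (M * ‖y - x‖) := add_le_add h1 h2
    _ = 2 * M ^ 2 * ‖y - x‖ := by ring

lemma flow_taylor (hf : ContDiff ℝ 3 f)
    (hM0 : ∀ x, ‖f x‖ ≤ M) (hM1 : ∀ x, ‖fderiv ℝ f x‖ ≤ M)
    (hM2 : ∀ x, ‖fderiv ℝ (fderiv ℝ f) x‖ ≤ M)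
    {Φ : ℝ → E → E} (hΦ0 : ∀ ξ, Φ 0 ξ = ξ)
    (hΦ : ∀ t ξ, HasDerivAt (fun s => Φ s ξ) (f (Φ t ξ)) t)
    (ξ : E) {t : ℝ} (ht : 0 ≤ t) :
    ‖Φ t ξ - ξ - t • f ξ - (t ^ 2 / 2) • (fderiv ℝ f ξ (f ξ))‖ ≤ 2 * M ^ 3 * t ^ 3 / 6 := by
  have hMnn : 0 ≤ M := le_trans (norm_nonneg _) (hM0 ξ)
  have hg : ∀ s, HasDerivAt (fun s => Φ s ξ) (f (Φ s ξ)) s := fun s => hΦ s ξ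
  have hg1 : ∀ s, HasDerivAt (fun s => f (Φ s ξ)) (fderiv ℝ f (Φ s ξ) (f (Φ s ξ))) s := fun s =>
    (hf.differentiable (by norm_num) (Φ s ξ)).hasFDerivAt.comp_hasDerivAt s (hg s)
  have hdf : Differentiable ℝ (fderiv ℝ f) :=
    (hf.fderiv_right (m := 1) (by norm_num)).differentiable (by norm_num)
  have hg2 : ∀ s, HasDerivAt (fun s => fderiv ℝ f (Φ s ξ) (f (Φ s ξ)))
      ((fderiv ℝ (fderiv ℝ f) (Φ s ξ) (f (Φ s ξ))) (f (Φ s ξ))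
        + fderiv ℝ f (Φ s ξ) (fderiv ℝ f (Φ s ξ) (f (Φ s ξ)))) s := by
    intro s
    have hA : HasDerivAt (fun u => fderiv ℝ f (Φ u ξ))
        (fderiv ℝ (fderiv ℝ f) (Φ s ξ) (f (Φ s ξ))) s :=
      (hdf (Φ s ξ)).hasFDerivAt.comp_hasDerivAt s (hg s)
    exact hA.clm_apply (hg1 s)
  have hb3 : ∀ s, ‖(fderiv ℝ (fderiv ℝ f) (Φ s ξ) (f (Φ s ξ))) (f (Φ s ξ))
      + fderiv ℝ f (Φ s ξ) (fderiv ℝ f (Φ s ξ) (f (Φ s ξ)))‖ ≤ 2 * M ^ 3 := by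
    intro s
    have hb2 : ‖fderiv ℝ f (Φ s ξ) (f (Φ s ξ))‖ ≤ M * M :=
      le_trans (ContinuousLinearMap.le_opNorm _ _)
        (mul_le_mul (hM1 _) (hM0 _) (norm_nonneg _) hMnn)
    have h1 : ‖(fderiv ℝ (fderiv ℝ f) (Φ s ξ) (f (Φ s ξ))) (f (Φ s ξ))‖ ≤ M * M * M := by
      refine le_trans (ContinuousLinearMap.le_opNorm _ _) ?_
      refine mul_le_mul ?_ (hM0 _) (norm_nonneg _) (by positivity)
      exact le_trans (ContinuousLinearMap.le_opNorm _ _)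
        (mul_le_mul (hM2 _) (hM0 _) (norm_nonneg _) hMnn)
    have h2 : ‖fderiv ℝ f (Φ s ξ) (fderiv ℝ f (Φ s ξ) (f (Φ s ξ)))‖ ≤ M * (M * M) :=
      le_trans (ContinuousLinearMap.le_opNorm _ _)
        (mul_le_mul (hM1 _) hb2 (norm_nonneg _) hMnn)
    calc ‖_ + _‖ ≤ _ + _ := norm_add_le _ _
      _ ≤ M * M * M + M * (M * M) := add_le_add h1 h2
      _ = 2 * M ^ 3 := by ring
  have := curve_taylor2 hg hg1 hg2 hb3 ht
  simpa [hΦ0 ξ] using this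

lemma flow_lip (hf : ContDiff ℝ 3 f) (hM0 : ∀ x, ‖f x‖ ≤ M)
    {Φ : ℝ → E → E} (hΦ0 : ∀ ξ, Φ 0 ξ = ξ)
    (hΦ : ∀ t ξ, HasDerivAt (fun s => Φ s ξ) (f (Φ t ξ)) t)
    (ξ : E) {t : ℝ} (ht : 0 ≤ t) : ‖Φ t ξ - ξ‖ ≤ M * t := by
  have := curve_lip (g := fun s => Φ s ξ) (g1 := fun s => f (Φ s ξ))
    (fun s => hΦ s ξ) (fun s => hM0 _) ht
  simpa [hΦ0 ξ] using this

end VF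



lemma norm_fderiv_eq_one {F : Type*} [NormedAddCommGroup F] [NormedSpace ℝ F]
    (g : E → F) (x : E) : ‖fderiv ℝ g x‖ = ‖iteratedFDeriv ℝ 1 g x‖ := by
  simpa [norm_iteratedFDeriv_zero] using
    (norm_iteratedFDeriv_fderiv (𝕜 := ℝ) (f := g) (n := 0) (x := x))

lemma norm_fderiv2_eq_two {F : Type*} [NormedAddCommGroup F] [NormedSpace ℝ F]
    (g : E → F) (x : E) : ‖fderiv ℝ (fderiv ℝ g) x‖ = ‖iteratedFDeriv ℝ 2 g x‖ := by
  rw [norm_fderiv_eq_one (fderiv ℝ g) x]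
  simpa using (norm_iteratedFDeriv_fderiv (𝕜 := ℝ) (f := g) (n := 1) (x := x))

lemma norm_add7_sub_le (x1 x2 x3 x4 x5 x6 x7 y : E) :
    ‖x1 + x2 + x3 + x4 + x5 + x6 + x7 - y‖ ≤
      ‖x1‖ + ‖x2‖ + ‖x3‖ + ‖x4‖ + ‖x5‖ + ‖x6‖ + ‖x7‖ + ‖y‖ := by
  refine le_trans (norm_sub_le _ _) (add_le_add ?_ le_rfl)
  refine le_trans (norm_add_le _ _) (add_le_add ?_ le_rfl)
  refine le_trans (norm_add_le _ _) (add_le_add ?_ le_rfl)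
  refine le_trans (norm_add_le _ _) (add_le_add ?_ le_rfl)
  refine le_trans (norm_add_le _ _) (add_le_add ?_ le_rfl)
  refine le_trans (norm_add_le _ _) (add_le_add ?_ le_rfl)
  exact norm_add_le _ _


set_option maxHeartbeats 2000000 in


/-- Local error of Strang splitting for `x' = f₁(x) + f₂(x)` with smooth
vector fields having bounded derivatives up to order 3:  for each `x₀` there
are `C ≥ 0` and `h₀ > 0` with `‖Φ₁(h/2, Φ₂(h, Φ₁(h/2, x₀))) - Φ(h, x₀)‖ ≤ C h³` for all
`h ∈ [0, h₀]`, where `Φ₁, Φ₂, Φ` are the exact flows of `f₁`, `f₂`, `f₁+f₂`. -/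
theorem strang_local_error_nonlinear {n : ℕ}
    (f₁ f₂ : (Fin n → ℝ) → (Fin n → ℝ))
    (hf₁ : ContDiff ℝ 3 f₁) (hf₂ : ContDiff ℝ 3 f₂)
    (hb₁ : ∀ i : ℕ, i ≤ 3 → ∃ C : ℝ, ∀ x : Fin n → ℝ, ‖iteratedFDeriv ℝ i f₁ x‖ ≤ C)
    (hb₂ : ∀ i : ℕ, i ≤ 3 → ∃ C : ℝ, ∀ x : Fin n → ℝ, ‖iteratedFDeriv ℝ i f₂ x‖ ≤ C)
    (Φ₁ Φ₂ Φ : ℝ → (Fin n → ℝ) → (Fin n → ℝ))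
    (hΦ₁0 : ∀ ξ, Φ₁ 0 ξ = ξ)
    (hΦ₁ : ∀ t ξ, HasDerivAt (fun s => Φ₁ s ξ) (f₁ (Φ₁ t ξ)) t)
    (hΦ₂0 : ∀ ξ, Φ₂ 0 ξ = ξ)
    (hΦ₂ : ∀ t ξ, HasDerivAt (fun s => Φ₂ s ξ) (f₂ (Φ₂ t ξ)) t)
    (hΦ0 : ∀ ξ, Φ 0 ξ = ξ)
    (hΦ : ∀ t ξ, HasDerivAt (fun s => Φ s ξ) (f₁ (Φ t ξ) + f₂ (Φ t ξ)) t) :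
    ∀ x₀ : Fin n → ℝ, ∃ C : ℝ, 0 ≤ C ∧ ∃ h₀ : ℝ, 0 < h₀ ∧
      ∀ h : ℝ, 0 ≤ h → h ≤ h₀ →
        ‖Φ₁ (h / 2) (Φ₂ h (Φ₁ (h / 2) x₀)) - Φ h x₀‖ ≤ C * h ^ 3 := by
  obtain ⟨C10, hC10⟩ := hb₁ 0 (by norm_num)
  obtain ⟨C11, hC11⟩ := hb₁ 1 (by norm_num)
  obtain ⟨C12, hC12⟩ := hb₁ 2 (by norm_num)
  obtain ⟨C20, hC20⟩ := hb₂ 0 (by norm_num)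
  obtain ⟨C21, hC21⟩ := hb₂ 1 (by norm_num)
  obtain ⟨C22, hC22⟩ := hb₂ 2 (by norm_num)
  have habs : ∃ M : ℝ, C10 ≤ M ∧ C11 ≤ M ∧ C12 ≤ M ∧ C20 ≤ M ∧ C21 ≤ M ∧ C22 ≤ M ∧ 1 ≤ M := by
    refine ⟨1 + (|C10| + |C11| + |C12| + |C20| + |C21| + |C22|), ?_, ?_, ?_, ?_, ?_, ?_, ?_⟩ <;>
      linarith [le_abs_self C10, le_abs_self C11, le_abs_self C12, le_abs_self C20,
        le_abs_self C21, le_abs_self C22, abs_nonneg C10, abs_nonneg C11, abs_nonneg C12,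
        abs_nonneg C20, abs_nonneg C21, abs_nonneg C22]
  obtain ⟨M, hC10M, hC11M, hC12M, hC20M, hC21M, hC22M, hM1le⟩ := habs
  have hMnn : (0:ℝ) ≤ M := by linarith
  have hM0₁ : ∀ x, ‖f₁ x‖ ≤ M := fun x => by
    rw [← norm_iteratedFDeriv_zero (𝕜 := ℝ)]; exact le_trans (hC10 x) hC10M
  have hM1₁ : ∀ x, ‖fderiv ℝ f₁ x‖ ≤ M := fun x => by
    rw [norm_fderiv_eq_one]; exact le_trans (hC11 x) hC11M
  have hM2₁ : ∀ x, ‖fderiv ℝ (fderiv ℝ f₁) x‖ ≤ M := fun x => by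
    rw [norm_fderiv2_eq_two]; exact le_trans (hC12 x) hC12M
  have hM0₂ : ∀ x, ‖f₂ x‖ ≤ M := fun x => by
    rw [← norm_iteratedFDeriv_zero (𝕜 := ℝ)]; exact le_trans (hC20 x) hC20M
  have hM1₂ : ∀ x, ‖fderiv ℝ f₂ x‖ ≤ M := fun x => by
    rw [norm_fderiv_eq_one]; exact le_trans (hC21 x) hC21M
  have hM2₂ : ∀ x, ‖fderiv ℝ (fderiv ℝ f₂) x‖ ≤ M := fun x => by
    rw [norm_fderiv2_eq_two]; exact le_trans (hC22 x) hC22M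
  -- the sum vector field
  have hF : ContDiff ℝ 3 (fun x => f₁ x + f₂ x) := hf₁.add hf₂
  have hdF : ∀ x, fderiv ℝ (fun y => f₁ y + f₂ y) x = fderiv ℝ f₁ x + fderiv ℝ f₂ x :=
    fun x => fderiv_add (hf₁.differentiable (by norm_num) x) (hf₂.differentiable (by norm_num) x)
  have hM0F : ∀ x, ‖f₁ x + f₂ x‖ ≤ 2 * M := fun x =>
    le_trans (norm_add_le _ _) (by linarith [hM0₁ x, hM0₂ x])
  have hM1F : ∀ x, ‖fderiv ℝ (fun y => f₁ y + f₂ y) x‖ ≤ 2 * M := fun x => by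
    rw [hdF x]; exact le_trans (norm_add_le _ _) (by linarith [hM1₁ x, hM1₂ x])
  have hdFfun : (fderiv ℝ (fun y => f₁ y + f₂ y)) = fun x => fderiv ℝ f₁ x + fderiv ℝ f₂ x :=
    funext hdF
  have hM2F : ∀ x, ‖fderiv ℝ (fderiv ℝ (fun y => f₁ y + f₂ y)) x‖ ≤ 2 * M := fun x => by
    rw [hdFfun, fderiv_fun_add
      (((hf₁.fderiv_right (m := 1) (by norm_num)).differentiable (by norm_num)) x)
      (((hf₂.fderiv_right (m := 1) (by norm_num)).differentiable (by norm_num)) x)]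
    exact le_trans (norm_add_le (fderiv ℝ (fderiv ℝ f₁) x) (fderiv ℝ (fderiv ℝ f₂) x))
      (by linarith [hM2₁ x, hM2₂ x])
  intro x₀
  refine ⟨40 * M ^ 4, by positivity, 1, one_pos, ?_⟩
  intro h hh0 hh1
  have ht2 : (0:ℝ) ≤ h / 2 := by linarith
  set a := Φ₁ (h / 2) x₀ with ha
  set b := Φ₂ h a with hb
  set c := Φ₁ (h / 2) b with hc
  -- numeric hints
  have hint0 : (0:ℝ) ≤ M ^ 3 * h ^ 3 := by positivity
  have hintM : (0:ℝ) ≤ M ^ 3 * h ^ 3 * (M - 1) := mul_nonneg hint0 (by linarith)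
  have hinth : (0:ℝ) ≤ M ^ 4 * h ^ 3 * (1 - h) := mul_nonneg (by positivity) (by linarith)
  have hint4 : (0:ℝ) ≤ M ^ 4 * h ^ 3 := by positivity
  -- flow Taylor expansions
  have hE₁ : ‖a - x₀ - (h / 2) • f₁ x₀ - ((h / 2) ^ 2 / 2) • (fderiv ℝ f₁ x₀ (f₁ x₀))‖ ≤
      2 * M ^ 3 * (h / 2) ^ 3 / 6 := by
    rw [ha]; exact flow_taylor hf₁ hM0₁ hM1₁ hM2₁ hΦ₁0 hΦ₁ x₀ ht2
  have hE₂ : ‖b - a - h • f₂ a - (h ^ 2 / 2) • (fderiv ℝ f₂ a (f₂ a))‖ ≤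
      2 * M ^ 3 * h ^ 3 / 6 := by
    rw [hb]; exact flow_taylor hf₂ hM0₂ hM1₂ hM2₂ hΦ₂0 hΦ₂ a hh0
  have hE₃ : ‖c - b - (h / 2) • f₁ b - ((h / 2) ^ 2 / 2) • (fderiv ℝ f₁ b (f₁ b))‖ ≤
      2 * M ^ 3 * (h / 2) ^ 3 / 6 := by
    rw [hc]; exact flow_taylor hf₁ hM0₁ hM1₁ hM2₁ hΦ₁0 hΦ₁ b ht2
  have happ : fderiv ℝ (fun y => f₁ y + f₂ y) x₀ (f₁ x₀ + f₂ x₀) =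
      fderiv ℝ f₁ x₀ (f₁ x₀) + fderiv ℝ f₁ x₀ (f₂ x₀) +
        fderiv ℝ f₂ x₀ (f₁ x₀) + fderiv ℝ f₂ x₀ (f₂ x₀) := by
    rw [hdF x₀]
    simp only [ContinuousLinearMap.add_apply, map_add]
    abel
  have hE₄ : ‖Φ h x₀ - x₀ - h • (f₁ x₀ + f₂ x₀) - (h ^ 2 / 2) •
      (fderiv ℝ f₁ x₀ (f₁ x₀) + fderiv ℝ f₁ x₀ (f₂ x₀) +
        fderiv ℝ f₂ x₀ (f₁ x₀) + fderiv ℝ f₂ x₀ (f₂ x₀))‖ ≤ 2 * (2 * M) ^ 3 * h ^ 3 / 6 := by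
    have h' : ‖Φ h x₀ - x₀ - h • (f₁ x₀ + f₂ x₀) - (h ^ 2 / 2) •
        (fderiv ℝ (fun y => f₁ y + f₂ y) x₀ (f₁ x₀ + f₂ x₀))‖ ≤ 2 * (2 * M) ^ 3 * h ^ 3 / 6 :=
      flow_taylor hF hM0F hM1F hM2F hΦ0 hΦ x₀ hh0
    rwa [happ] at h'
  -- displacement bounds
  have hax : ‖a - x₀‖ ≤ M * (h / 2) := by
    rw [ha]; exact flow_lip hf₁ hM0₁ hΦ₁0 hΦ₁ x₀ ht2
  have hba : ‖b - a‖ ≤ M * h := by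
    rw [hb]; exact flow_lip hf₂ hM0₂ hΦ₂0 hΦ₂ a hh0
  have hbx : ‖b - x₀‖ ≤ 2 * M * h := by
    have hsplit : b - x₀ = (b - a) + (a - x₀) := by abel
    rw [hsplit]
    refine le_trans (norm_add_le _ _) ?_
    nlinarith only [hba, hax, mul_nonneg hMnn hh0]
  -- operator application bounds
  have hA1p1 : ‖fderiv ℝ f₁ x₀ (f₁ x₀)‖ ≤ M * M :=
    le_trans ((fderiv ℝ f₁ x₀).le_opNorm _)
      (mul_le_mul (hM1₁ x₀) (hM0₁ x₀) (norm_nonneg _) hMnn)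
  have hDf2a : ‖fderiv ℝ f₂ a (f₂ a)‖ ≤ M * M :=
    le_trans ((fderiv ℝ f₂ a).le_opNorm _)
      (mul_le_mul (hM1₂ a) (hM0₂ a) (norm_nonneg _) hMnn)
  -- ‖a - x₀ - (h/2)•f₁ x₀‖ bound
  have hq₁ : ‖a - x₀ - (h / 2) • f₁ x₀‖ ≤
      2 * M ^ 3 * (h / 2) ^ 3 / 6 + ((h / 2) ^ 2 / 2) * (M * M) := by
    have hxsplit : a - x₀ - (h / 2) • f₁ x₀ =
        (a - x₀ - (h / 2) • f₁ x₀ - ((h / 2) ^ 2 / 2) • (fderiv ℝ f₁ x₀ (f₁ x₀))) +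
          ((h / 2) ^ 2 / 2) • (fderiv ℝ f₁ x₀ (f₁ x₀)) := by module
    rw [hxsplit]
    refine le_trans (norm_add_le _ _) (add_le_add hE₁ ?_)
    rw [norm_smul, Real.norm_eq_abs, abs_of_nonneg (by positivity)]
    exact mul_le_mul_of_nonneg_left hA1p1 (by positivity)
  -- Lipschitz bound for f₂ between x₀ and a
  have hf2lipax : ‖f₂ a - f₂ x₀‖ ≤ M * (M * (h / 2)) := by
    have h' := vf_lip hf₂ hM1₂ x₀ a
    nlinarith only [h', hax, hMnn, norm_nonneg (a - x₀)]
  -- E2a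
  have hE2a : ‖f₂ a - f₂ x₀ - (h / 2) • (fderiv ℝ f₂ x₀ (f₁ x₀))‖ ≤
      M * ((M * (h / 2)) * (M * (h / 2))) +
        M * (2 * M ^ 3 * (h / 2) ^ 3 / 6 + ((h / 2) ^ 2 / 2) * (M * M)) := by
    have key2 : f₂ a - f₂ x₀ - (h / 2) • (fderiv ℝ f₂ x₀ (f₁ x₀)) =
        (f₂ a - f₂ x₀ - fderiv ℝ f₂ x₀ (a - x₀)) +
          fderiv ℝ f₂ x₀ (a - x₀ - (h / 2) • f₁ x₀) := by
      simp only [map_sub, map_smul]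
      module
    rw [key2]
    have h1 := vf_taylor hf₂ hM2₂ x₀ a
    have h2 : ‖fderiv ℝ f₂ x₀ (a - x₀ - (h / 2) • f₁ x₀)‖ ≤
        M * ‖a - x₀ - (h / 2) • f₁ x₀‖ :=
      le_trans ((fderiv ℝ f₂ x₀).le_opNorm _)
        (mul_le_mul_of_nonneg_right (hM1₂ x₀) (norm_nonneg _))
    refine le_trans (norm_add_le _ _) ?_
    have huu : ‖a - x₀‖ * ‖a - x₀‖ ≤ (M * (h / 2)) * (M * (h / 2)) :=
      mul_le_mul hax hax (norm_nonneg _) (mul_nonneg hMnn ht2)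
    nlinarith only [h1, h2, hq₁, huu, norm_nonneg (a - x₀ - (h / 2) • f₁ x₀), hMnn]
  -- E2b
  have hE2b : ‖fderiv ℝ f₂ a (f₂ a) - fderiv ℝ f₂ x₀ (f₂ x₀)‖ ≤ 2 * M ^ 2 * (M * (h / 2)) := by
    have h' := vf_lipDf hf₂ hM0₂ hM1₂ hM2₂ x₀ a
    nlinarith only [h', hax, norm_nonneg (a - x₀), sq_nonneg M]
  -- delta bound
  have hδ : ‖b - x₀ - (h / 2) • f₁ x₀ - h • f₂ x₀‖ ≤
      2 * M ^ 3 * h ^ 3 / 6 + (2 * M ^ 3 * (h / 2) ^ 3 / 6 + ((h / 2) ^ 2 / 2) * (M * M)) +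
        (h * (M * (M * (h / 2))) + (h ^ 2 / 2) * (M * M)) := by
    have keyδ : b - x₀ - (h / 2) • f₁ x₀ - h • f₂ x₀ =
        (b - a - h • f₂ a - (h ^ 2 / 2) • (fderiv ℝ f₂ a (f₂ a))) +
          (a - x₀ - (h / 2) • f₁ x₀) +
          (h • (f₂ a - f₂ x₀) + (h ^ 2 / 2) • (fderiv ℝ f₂ a (f₂ a))) := by module
    rw [keyδ]
    refine le_trans (norm_add_le _ _) (add_le_add (le_trans (norm_add_le _ _)
      (add_le_add hE₂ hq₁)) ?_)
    refine le_trans (norm_add_le _ _) (add_le_add ?_ ?_)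
    · rw [norm_smul, Real.norm_eq_abs, abs_of_nonneg hh0]
      exact mul_le_mul_of_nonneg_left hf2lipax hh0
    · rw [norm_smul, Real.norm_eq_abs, abs_of_nonneg (by positivity)]
      exact mul_le_mul_of_nonneg_left hDf2a (by positivity)
  -- E3a
  have hE3a : ‖f₁ b - f₁ x₀ - (h / 2) • (fderiv ℝ f₁ x₀ (f₁ x₀)) -
      h • (fderiv ℝ f₁ x₀ (f₂ x₀))‖ ≤
      M * ((2 * M * h) * (2 * M * h)) +
        M * (2 * M ^ 3 * h ^ 3 / 6 + (2 * M ^ 3 * (h / 2) ^ 3 / 6 + ((h / 2) ^ 2 / 2) * (M * M)) +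
          (h * (M * (M * (h / 2))) + (h ^ 2 / 2) * (M * M))) := by
    have key3 : f₁ b - f₁ x₀ - (h / 2) • (fderiv ℝ f₁ x₀ (f₁ x₀)) -
        h • (fderiv ℝ f₁ x₀ (f₂ x₀)) =
        (f₁ b - f₁ x₀ - fderiv ℝ f₁ x₀ (b - x₀)) +
          fderiv ℝ f₁ x₀ (b - x₀ - (h / 2) • f₁ x₀ - h • f₂ x₀) := by
      simp only [map_sub, map_smul]
      module
    rw [key3]
    have h1 := vf_taylor hf₁ hM2₁ x₀ b
    have h2 : ‖fderiv ℝ f₁ x₀ (b - x₀ - (h / 2) • f₁ x₀ - h • f₂ x₀)‖ ≤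
        M * ‖b - x₀ - (h / 2) • f₁ x₀ - h • f₂ x₀‖ :=
      le_trans ((fderiv ℝ f₁ x₀).le_opNorm _)
        (mul_le_mul_of_nonneg_right (hM1₁ x₀) (norm_nonneg _))
    refine le_trans (norm_add_le _ _) ?_
    have huu : ‖b - x₀‖ * ‖b - x₀‖ ≤ (2 * M * h) * (2 * M * h) :=
      mul_le_mul hbx hbx (norm_nonneg _) (mul_nonneg (mul_nonneg (by norm_num) hMnn) hh0)
    nlinarith only [h1, h2, hδ, huu, norm_nonneg (b - x₀ - (h / 2) • f₁ x₀ - h • f₂ x₀), hMnn]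
  -- E3b
  have hE3b : ‖fderiv ℝ f₁ b (f₁ b) - fderiv ℝ f₁ x₀ (f₁ x₀)‖ ≤ 2 * M ^ 2 * (2 * M * h) := by
    have h' := vf_lipDf hf₁ hM0₁ hM1₁ hM2₁ x₀ b
    nlinarith only [h', hbx, norm_nonneg (b - x₀), sq_nonneg M]
  -- the key algebraic identity
  have key : c - Φ h x₀ =
      (a - x₀ - (h / 2) • f₁ x₀ - ((h / 2) ^ 2 / 2) • (fderiv ℝ f₁ x₀ (f₁ x₀))) +
      (b - a - h • f₂ a - (h ^ 2 / 2) • (fderiv ℝ f₂ a (f₂ a))) +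
      (c - b - (h / 2) • f₁ b - ((h / 2) ^ 2 / 2) • (fderiv ℝ f₁ b (f₁ b))) +
      h • (f₂ a - f₂ x₀ - (h / 2) • (fderiv ℝ f₂ x₀ (f₁ x₀))) +
      (h ^ 2 / 2) • (fderiv ℝ f₂ a (f₂ a) - fderiv ℝ f₂ x₀ (f₂ x₀)) +
      (h / 2) • (f₁ b - f₁ x₀ - (h / 2) • (fderiv ℝ f₁ x₀ (f₁ x₀)) -
        h • (fderiv ℝ f₁ x₀ (f₂ x₀))) +
      ((h / 2) ^ 2 / 2) • (fderiv ℝ f₁ b (f₁ b) - fderiv ℝ f₁ x₀ (f₁ x₀)) -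
      (Φ h x₀ - x₀ - h • (f₁ x₀ + f₂ x₀) - (h ^ 2 / 2) •
        (fderiv ℝ f₁ x₀ (f₁ x₀) + fderiv ℝ f₁ x₀ (f₂ x₀) +
          fderiv ℝ f₂ x₀ (f₁ x₀) + fderiv ℝ f₂ x₀ (f₂ x₀))) := by
    module
  -- final estimates for each term
  have b1 : ‖a - x₀ - (h / 2) • f₁ x₀ - ((h / 2) ^ 2 / 2) • (fderiv ℝ f₁ x₀ (f₁ x₀))‖ ≤
      5 * M ^ 4 * h ^ 3 := le_trans hE₁ (by nlinarith only [hintM, hint0])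
  have b2 : ‖b - a - h • f₂ a - (h ^ 2 / 2) • (fderiv ℝ f₂ a (f₂ a))‖ ≤ 5 * M ^ 4 * h ^ 3 :=
    le_trans hE₂ (by nlinarith only [hintM, hint0])
  have b3 : ‖c - b - (h / 2) • f₁ b - ((h / 2) ^ 2 / 2) • (fderiv ℝ f₁ b (f₁ b))‖ ≤
      5 * M ^ 4 * h ^ 3 := le_trans hE₃ (by nlinarith only [hintM, hint0])
  have b4 : ‖h • (f₂ a - f₂ x₀ - (h / 2) • (fderiv ℝ f₂ x₀ (f₁ x₀)))‖ ≤ 5 * M ^ 4 * h ^ 3 := by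
    rw [norm_smul, Real.norm_eq_abs, abs_of_nonneg hh0]
    refine le_trans (mul_le_mul_of_nonneg_left hE2a hh0) ?_
    nlinarith only [hintM, hint0, hinth, hint4]
  have b5 : ‖(h ^ 2 / 2) • (fderiv ℝ f₂ a (f₂ a) - fderiv ℝ f₂ x₀ (f₂ x₀))‖ ≤
      5 * M ^ 4 * h ^ 3 := by
    rw [norm_smul, Real.norm_eq_abs, abs_of_nonneg (by positivity)]
    refine le_trans (mul_le_mul_of_nonneg_left hE2b (by positivity)) ?_
    nlinarith only [hintM, hint0, hinth, hint4]
  have b6 : ‖(h / 2) • (f₁ b - f₁ x₀ - (h / 2) • (fderiv ℝ f₁ x₀ (f₁ x₀)) -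
      h • (fderiv ℝ f₁ x₀ (f₂ x₀)))‖ ≤ 5 * M ^ 4 * h ^ 3 := by
    rw [norm_smul, Real.norm_eq_abs, abs_of_nonneg ht2]
    refine le_trans (mul_le_mul_of_nonneg_left hE3a ht2) ?_
    nlinarith only [hintM, hint0, hinth, hint4]
  have b7 : ‖((h / 2) ^ 2 / 2) • (fderiv ℝ f₁ b (f₁ b) - fderiv ℝ f₁ x₀ (f₁ x₀))‖ ≤
      5 * M ^ 4 * h ^ 3 := by
    rw [norm_smul, Real.norm_eq_abs, abs_of_nonneg (by positivity)]
    refine le_trans (mul_le_mul_of_nonneg_left hE3b (by positivity)) ?_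
    nlinarith only [hintM, hint0, hinth, hint4]
  have b8 : ‖Φ h x₀ - x₀ - h • (f₁ x₀ + f₂ x₀) - (h ^ 2 / 2) •
      (fderiv ℝ f₁ x₀ (f₁ x₀) + fderiv ℝ f₁ x₀ (f₂ x₀) +
        fderiv ℝ f₂ x₀ (f₁ x₀) + fderiv ℝ f₂ x₀ (f₂ x₀))‖ ≤ 5 * M ^ 4 * h ^ 3 :=
    le_trans hE₄ (by nlinarith only [hintM, hint0])
  rw [key]
  refine le_trans (norm_add7_sub_le _ _ _ _ _ _ _ _) ?_
  linarith only [b1, b2, b3, b4, b5, b6, b7, b8]
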